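/- Let A and B be finitely generated abelian groups with A a subgroup of B. If for every prime number p the inclusion A → B induces an isomorphism (equivalently, a surjection) A ⊗_ℤ ℤ_p → B ⊗_ℤ ℤ_p, where ℤ_p denotes the ring of p-adic integers, then A = B. -/

import Mathlib

open scoped TensorProduct

set_option maxHeartbeats 1000000

/-- Lemma 2.1 of the paper.
Let `A` be a subgroup of a finitely generated abelian group `B`, with `A`
finitely generated as well.  If for every prime `p` the map
`A ⊗_ℤ ℤ_p → B ⊗_ℤ ℤ_p` induced by the inclusion `A → B` is surjective
(equivalently, an isomorphism, since `ℤ_p` is flat over `ℤ`), then `A = B`. -/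
theorem subgroup_eq_top_of_surjective_tensor_padic
    {B : Type*} [AddCommGroup B] (hB : AddGroup.FG B)
    (A : AddSubgroup B) (hA : AddGroup.FG A)
    (h : ∀ (p : ℕ) [Fact p.Prime],
      Function.Surjective
        (LinearMap.rTensor ℤ_[p] A.subtype.toIntLinearMap)) :
    A = ⊤ := by
  by_contra hAne
  haveI hfin : Module.Finite ℤ B := Module.Finite.iff_addGroup_fg.mpr hB
  haveI : IsNoetherian ℤ B := inferInstance
  set A' : Submodule ℤ B := AddSubgroup.toIntSubmodule A with hA'def
  have hA' : A' ≠ ⊤ := by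
    intro hh
    refine hAne (SetLike.coe_injective ?_)
    rw [← AddSubgroup.coe_toIntSubmodule A, ← hA'def, hh]
    rfl
  obtain ⟨M, hM, hAM⟩ := (eq_top_or_exists_le_coatom A').resolve_left hA'
  haveI hsimple : IsSimpleModule ℤ (B ⧸ M) := isSimpleModule_iff_isCoatom.mpr hM
  set I := Module.annihilator ℤ (B ⧸ M) with hI
  have hann : I.IsMaximal := IsSimpleModule.annihilator_isMaximal
  obtain ⟨g, hgspan⟩ : ∃ g : ℤ, I = Ideal.span {g} := by
    obtain ⟨g, hg⟩ := Submodule.IsPrincipal.principal I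
    exact ⟨g, hg⟩
  have hg0 : g ≠ 0 := by
    intro hg0
    have hbot : I = ⊥ := by
      rw [hgspan, hg0]; exact Ideal.span_singleton_eq_bot.mpr rfl
    have h2top : Ideal.span ({2} : Set ℤ) ≠ ⊤ := by
      intro htop
      rw [Ideal.span_singleton_eq_top, Int.isUnit_iff] at htop
      omega
    have heq : I = Ideal.span ({2} : Set ℤ) :=
      hann.eq_of_le h2top (hbot ▸ bot_le)
    have h2 : (2 : ℤ) ∈ (⊥ : Ideal ℤ) := by
      rw [← hbot, heq]; exact Ideal.mem_span_singleton_self 2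
    simp at h2
  have hgprime : Prime g := by
    have := hann.isPrime
    rw [hgspan] at this
    exact (Ideal.span_singleton_prime hg0).mp this
  set p : ℕ := g.natAbs with hpdef
  have hp : p.Prime := Int.prime_iff_natAbs_prime.mp hgprime
  haveI : Fact p.Prime := ⟨hp⟩
  have htor : ∀ s : B ⧸ M, p • s = 0 := by
    intro s
    have hgI : g ∈ I := by rw [hgspan]; exact Ideal.mem_span_singleton_self g
    have hg : g • s = 0 := Module.mem_annihilator.mp hgI s
    have hz : (p : ℤ) • s = 0 := by
      rcases Int.natAbs_eq g with h' | h'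
      · rw [← h']; exact hg
      · have : ((p : ℤ)) • s = -(g • s) := by rw [h', neg_smul, neg_neg]
        rw [this, hg, neg_zero]
    simpa [natCast_zsmul] using hz
  letI : Module (ZMod p) (B ⧸ M) := AddCommGroup.zmodModule htor
  -- the pairing  B ⊗ ℤ_p → B ⧸ M,  b ⊗ c ↦ (c mod p) • (b mod M)
  set Φ : B →+ (ℤ_[p] →ₗ[ℤ] (B ⧸ M)) :=
    { toFun := fun b =>
        ({ toFun := fun c => (PadicInt.toZMod c) • M.mkQ b
           map_zero' := by simp
           map_add' := fun c c' => by simp [map_add, add_smul] } : ℤ_[p] →+ B ⧸ M).toIntLinearMap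
      map_zero' := by ext c; simp
      map_add' := fun b b' => by ext c; simp [smul_add] } with hΦ
  set G : (B ⊗[ℤ] ℤ_[p]) →ₗ[ℤ] B ⧸ M := TensorProduct.lift Φ.toIntLinearMap with hG
  have hker : ∀ x, G (LinearMap.rTensor ℤ_[p] A.subtype.toIntLinearMap x) = 0 := by
    intro x
    induction x using TensorProduct.induction_on with
    | zero => simp
    | tmul a c =>
      have ha : (Submodule.Quotient.mk (a : B) : B ⧸ M) = 0 :=
        (Submodule.Quotient.mk_eq_zero M).mpr (hAM a.2)
      rw [LinearMap.rTensor_tmul, hG]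
      refine (TensorProduct.lift.tmul _ _).trans ?_
      show PadicInt.toZMod c • M.mkQ (a : B) = 0
      rw [Submodule.mkQ_apply, ha, smul_zero]
    | add x y hx hy => rw [map_add, map_add, hx, hy, add_zero]
  have hall : ∀ b : B, M.mkQ b = 0 := by
    intro b
    obtain ⟨x, hx⟩ := h p ((b ⊗ₜ (1 : ℤ_[p]) : B ⊗[ℤ] ℤ_[p]))
    have hGb : G (b ⊗ₜ[ℤ] (1 : ℤ_[p])) = M.mkQ b := by
      rw [hG]; refine (TensorProduct.lift.tmul _ _).trans ?_
      show PadicInt.toZMod (1 : ℤ_[p]) • M.mkQ b = M.mkQ b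
      rw [map_one, one_smul]
    rw [← hGb, ← hx, hker]
  exact hM.1 (by
    rw [eq_top_iff]
    intro b _
    simpa [Submodule.Quotient.mk_eq_zero] using hall b)
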